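/- For Γ ∈ 𝕋^d, the topological closure of the orbit {Γ^n : n ∈ ℕ} in 𝕋^d equals the set {z ∈ 𝕋^d : G(Γ) ⊆ G(z)}. -/

import Mathlib

open MeasureTheory Filter Topology

noncomputable instance : MeasurableSpace Circle := borel Circle
instance : BorelSpace Circle := ⟨rfl⟩

namespace OrbitClosureAux

variable {d : ℕ}

/-- The character of `𝕋^d` associated to an integer vector `a`. -/
noncomputable def chi (a : Fin d → ℤ) : C(Fin d → Circle, ℂ) :=
  ⟨fun w => ((∏ j, w j ^ a j : Circle) : ℂ),
   continuous_subtype_val.comp (continuous_finset_prod (M := Circle) _ fun j _ => (continuous_apply j).zpow _)⟩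

lemma chi_apply (a : Fin d → ℤ) (w : Fin d → Circle) :
    chi a w = ((∏ j, w j ^ a j : Circle) : ℂ) := rfl

lemma chi_mul_apply (a : Fin d → ℤ) (w w' : Fin d → Circle) :
    chi a (w * w') = chi a w * chi a w' := by
  simp only [chi_apply, Pi.mul_apply, mul_zpow, Finset.prod_mul_distrib, Circle.coe_mul]

lemma chi_mul (a b : Fin d → ℤ) : chi a * chi b = chi (a + b) := by
  ext w
  simp only [ContinuousMap.mul_apply, chi_apply, Pi.add_apply, zpow_add,
    Finset.prod_mul_distrib, Circle.coe_mul]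

lemma chi_zero : chi (0 : Fin d → ℤ) = 1 := by
  ext w
  simp [chi_apply]

lemma star_chi (a : Fin d → ℤ) : star (chi a) = chi (-a) := by
  ext w
  have : (∏ j, w j ^ (-a) j : Circle) = (∏ j, w j ^ a j : Circle)⁻¹ := by
    simp [zpow_neg, Finset.prod_inv_distrib]
  simp only [ContinuousMap.star_apply, chi_apply, this, Circle.coe_inv_eq_conj]
  rfl

lemma adjoin_le_span :
    ∀ x ∈ Algebra.adjoin ℂ (Set.range (chi (d := d))),
      x ∈ Submodule.span ℂ (Set.range (chi (d := d))) := by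
  intro x hx
  rw [← Subalgebra.mem_toSubmodule, Algebra.adjoin_eq_span] at hx
  refine Submodule.span_le.mpr ?_ hx
  intro y hy
  refine Submodule.subset_span ?_
  induction hy using Submonoid.closure_induction with
  | mem y hy => exact hy
  | one => exact ⟨0, chi_zero⟩
  | mul y z _ _ hy hz =>
      obtain ⟨a, rfl⟩ := hy
      obtain ⟨b, rfl⟩ := hz
      exact ⟨a + b, (chi_mul a b).symm⟩

lemma span_le_adjoin :
    Submodule.span ℂ (Set.range (chi (d := d))) ≤
      Subalgebra.toSubmodule (Algebra.adjoin ℂ (Set.range (chi (d := d)))) :=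
  Submodule.span_le.mpr Algebra.subset_adjoin

/-- The star subalgebra of `C(𝕋^d, ℂ)` generated by the characters. -/
noncomputable def charAlg (d : ℕ) : StarSubalgebra ℂ C(Fin d → Circle, ℂ) where
  toSubalgebra := Algebra.adjoin ℂ (Set.range (chi (d := d)))
  star_mem' := by
    intro x hx
    have hx' := adjoin_le_span x hx
    clear hx
    have : star x ∈ Submodule.span ℂ (Set.range (chi (d := d))) := by
      induction hx' using Submodule.span_induction with
      | mem y hy =>
          obtain ⟨a, rfl⟩ := hy
          rw [star_chi]
          exact Submodule.subset_span ⟨-a, rfl⟩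
      | zero => simp
      | add y z hy hz ihy ihz => rw [star_add]; exact Submodule.add_mem _ ihy ihz
      | smul c y hy ihy => rw [star_smul]; exact Submodule.smul_mem _ _ ihy
    exact span_le_adjoin this

lemma charAlg_separates (d : ℕ) : (charAlg d).SeparatesPoints := by
  intro w w' hww
  have : ∃ j, w j ≠ w' j := by
    by_contra h
    push_neg at h
    exact hww (funext h)
  obtain ⟨j, hj⟩ := this
  have key : ∀ v : Fin d → Circle, chi (Pi.single j (1 : ℤ)) v = (v j : ℂ) := by
    intro v
    rw [chi_apply]
    congr 1
    rw [Finset.prod_eq_single j]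
    · simp; rfl
    · intro i _ hi
      simp [Pi.single_eq_of_ne hi]
    · simp
  refine ⟨_, ⟨chi (Pi.single j (1 : ℤ)), Algebra.subset_adjoin ⟨_, rfl⟩, rfl⟩, ?_⟩
  simp only [key]
  exact fun h => hj (Subtype.coe_injective h)

variable (Γ : Fin d → Circle)

lemma inv_mem_orbitClosure : Γ⁻¹ ∈ closure {w : Fin d → Circle | ∃ n : ℕ, Γ ^ n = w} := by
  obtain ⟨w, -, φ, hφ, hlim⟩ :=
    isCompact_univ.tendsto_subseq (fun n => Set.mem_univ (Γ ^ n))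
  have hlim' : Tendsto (fun k => Γ ^ φ (k + 1)) atTop (𝓝 w) :=
    hlim.comp (tendsto_add_atTop_nat 1)
  have key : Tendsto (fun k => Γ ^ (φ (k + 1) - φ k - 1)) atTop (𝓝 Γ⁻¹) := by
    have h1 : ∀ k, Γ ^ (φ (k + 1) - φ k - 1) = Γ ^ φ (k + 1) * (Γ ^ φ k * Γ)⁻¹ := by
      intro k
      have h2 : φ k + 1 ≤ φ (k + 1) := hφ (Nat.lt_succ_self k)
      have h3 : (φ (k + 1) - φ k - 1) + (φ k + 1) = φ (k + 1) := by omega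
      have h4 := pow_add Γ (φ (k + 1) - φ k - 1) (φ k + 1)
      rw [h3] at h4
      rw [h4, pow_succ]
      group
    have h5 : Tendsto (fun k => Γ ^ φ (k + 1) * (Γ ^ φ k * Γ)⁻¹) atTop
        (𝓝 (w * (w * Γ)⁻¹)) :=
      hlim'.mul ((hlim.mul tendsto_const_nhds).inv)
    have h6 : w * (w * Γ)⁻¹ = Γ⁻¹ := by
      rw [mul_inv_rev, mul_comm Γ⁻¹ w⁻¹, ← mul_assoc, mul_inv_cancel, one_mul]
    rw [h6] at h5
    exact (funext h1 : (fun k => Γ ^ (φ (k + 1) - φ k - 1)) = _) ▸ h5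
  exact mem_closure_of_tendsto key (Eventually.of_forall fun k => ⟨_, rfl⟩)

lemma orbitClosure_eq :
    closure {w : Fin d → Circle | ∃ n : ℕ, Γ ^ n = w} =
      ((Subgroup.zpowers Γ).topologicalClosure : Set (Fin d → Circle)) := by
  rw [Subgroup.topologicalClosure_coe]
  apply Set.Subset.antisymm
  · apply closure_mono
    rintro w ⟨n, rfl⟩
    exact ⟨(n : ℤ), by simp⟩
  · have horb : {w : Fin d → Circle | ∃ n : ℕ, Γ ^ n = w} =
        ((Submonoid.powers Γ : Submonoid (Fin d → Circle)) : Set (Fin d → Circle)) := by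
      ext w
      exact ⟨fun ⟨n, h⟩ => ⟨n, h⟩, fun ⟨n, h⟩ => ⟨n, h⟩⟩
    have hM : closure {w : Fin d → Circle | ∃ n : ℕ, Γ ^ n = w} =
        ((Submonoid.powers Γ).topologicalClosure : Set (Fin d → Circle)) := by
      rw [horb, Submonoid.coe_topologicalClosure]
    have hsub : (Subgroup.zpowers Γ : Set (Fin d → Circle)) ⊆
        closure {w : Fin d → Circle | ∃ n : ℕ, Γ ^ n = w} := by
      intro x hx
      obtain ⟨k, rfl⟩ := Subgroup.mem_zpowers_iff.mp hx
      rcases le_or_gt 0 k with hk | hk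
      · have : Γ ^ k = Γ ^ k.toNat := by rw [← zpow_natCast, Int.toNat_of_nonneg hk]
        exact subset_closure ⟨k.toNat, this.symm⟩
      · have h1 : Γ⁻¹ ∈ (Submonoid.powers Γ).topologicalClosure := by
          rw [← SetLike.mem_coe, ← hM]
          exact inv_mem_orbitClosure Γ
        have h2 : Γ⁻¹ ^ (-k).toNat ∈ (Submonoid.powers Γ).topologicalClosure :=
          pow_mem h1 _
        have h3 : Γ ^ k = Γ⁻¹ ^ (-k).toNat := by
          rw [inv_pow, ← zpow_natCast, Int.toNat_of_nonneg (by omega), zpow_neg, inv_inv]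
        rw [h3, hM]
        exact h2
    calc closure (Subgroup.zpowers Γ : Set (Fin d → Circle))
        ⊆ closure (closure {w : Fin d → Circle | ∃ n : ℕ, Γ ^ n = w}) := closure_mono hsub
      _ = closure {w : Fin d → Circle | ∃ n : ℕ, Γ ^ n = w} := closure_closure

end OrbitClosureAux

open OrbitClosureAux

/-- The closure of the orbit `{Γ^n : n ∈ ℕ}` in `𝕋^d` is exactly the set of points
satisfying all multiplicative relations of `Γ`. -/
theorem orbit_closure_eq_mult_relations (d : ℕ) (Γ : Fin d → Circle) :
    closure {w : Fin d → Circle | ∃ n : ℕ, Γ ^ n = w} =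
      {z : Fin d → Circle | ∀ a : Fin d → ℤ, (∏ j, Γ j ^ a j) = 1 → (∏ j, z j ^ a j) = 1} := by
  apply Set.Subset.antisymm
  · -- easy direction
    apply closure_minimal
    · rintro w ⟨n, rfl⟩ a ha
      have : ∀ j, (Γ ^ n) j ^ a j = (Γ j ^ a j) ^ n := by
        intro j
        rw [Pi.pow_apply, ← zpow_natCast (Γ j) n, ← zpow_mul, mul_comm, zpow_mul, zpow_natCast]
      simp only [this]
      rw [Finset.prod_pow, ha, one_pow]
    · have : {z : Fin d → Circle |
          ∀ a : Fin d → ℤ, (∏ j, Γ j ^ a j) = 1 → (∏ j, z j ^ a j) = 1} =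
          ⋂ (a : Fin d → ℤ), ⋂ (_ : (∏ j, Γ j ^ a j) = 1),
            {z : Fin d → Circle | (∏ j, z j ^ a j) = 1} := by
        ext z; simp
      rw [this]
      refine isClosed_iInter fun a => isClosed_iInter fun _ => ?_
      exact isClosed_eq (continuous_finset_prod _ fun j _ => (continuous_apply j).zpow _)
        continuous_const
  · -- hard direction
    intro z hz
    rw [orbitClosure_eq Γ]
    set S : Subgroup (Fin d → Circle) := (Subgroup.zpowers Γ).topologicalClosure with hS
    have hSc : IsClosed (S : Set (Fin d → Circle)) :=
      (Subgroup.zpowers Γ).isClosed_topologicalClosure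
    by_contra hzS
    haveI : CompactSpace S := isCompact_iff_compactSpace.mp hSc.isCompact
    haveI : BorelSpace S := Subtype.borelSpace _
    set μ : Measure S := Measure.haar with hμ
    have hΓS : Γ ∈ S := Subgroup.le_topologicalClosure _ (Subgroup.mem_zpowers Γ)
    -- integrability of translates of continuous maps
    have hInt : ∀ (h : C(Fin d → Circle, ℂ)) (v : Fin d → Circle),
        Integrable (fun s : S => h (v * (s : Fin d → Circle))) μ := by
      intro h v
      have hc : Continuous fun s : S => h (v * (s : Fin d → Circle)) :=
        h.continuous.comp (continuous_const.mul continuous_subtype_val)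
      exact hc.integrable_of_hasCompactSupport (HasCompactSupport.of_compactSpace _)
    -- vanishing of nontrivial characters
    have hvanish : ∀ a : Fin d → ℤ, (∏ j, Γ j ^ a j) ≠ 1 →
        (∫ s : S, chi a (s : Fin d → Circle) ∂μ) = 0 := by
      intro a ha
      set γ : S := ⟨Γ, hΓS⟩ with hγ
      have h1 := integral_mul_left_eq_self (μ := μ)
        (fun s : S => chi a (s : Fin d → Circle)) γ
      have h2 : ∀ s : S, chi a ((γ * s : S) : Fin d → Circle) =
          chi a Γ * chi a (s : Fin d → Circle) := by
        intro s
        rw [show ((γ * s : S) : Fin d → Circle) = Γ * (s : Fin d → Circle) from rfl,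
          chi_mul_apply]
      simp only [h2] at h1
      rw [integral_const_mul] at h1
      have h3 : chi a Γ ≠ 1 := by
        rw [chi_apply, Ne, Circle.coe_eq_one]
        exact ha
      have h4 : (chi a Γ - 1) * (∫ s : S, chi a (s : Fin d → Circle) ∂μ) = 0 := by
        rw [sub_mul, one_mul, h1, sub_self]
      rcases mul_eq_zero.mp h4 with h | h
      · exact absurd (by linear_combination h) h3
      · exact h
    -- key identity on the span of characters
    have hkey : ∀ h ∈ Submodule.span ℂ (Set.range (chi (d := d))),
        (∫ s : S, h (z * (s : Fin d → Circle)) ∂μ) =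
          ∫ s : S, h ((s : Fin d → Circle)) ∂μ := by
      intro h hh
      induction hh using Submodule.span_induction with
      | mem f hf =>
          obtain ⟨a, rfl⟩ := hf
          by_cases hrel : (∏ j, Γ j ^ a j) = 1
          · have hz1 : chi a z = 1 := by
              rw [chi_apply, hz a hrel, Circle.coe_one]
            have : ∀ s : S, chi a (z * (s : Fin d → Circle)) =
                chi a ((s : Fin d → Circle)) := by
              intro s
              rw [chi_mul_apply, hz1, one_mul]
            simp only [this]
          · have h0 := hvanish a hrel
            have h1 : ∀ s : S, chi a (z * (s : Fin d → Circle)) =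
                chi a z * chi a ((s : Fin d → Circle)) := fun s => chi_mul_apply a z _
            simp only [h1]
            rw [integral_const_mul, h0, mul_zero]
      | zero => simp
      | add f g hf hg ihf ihg =>
          have h1 : ∀ v : Fin d → Circle, (f + g) v = f v + g v := fun v => rfl
          simp only [h1]
          have hIf : Integrable (fun s : S => f ((s : Fin d → Circle))) μ := by
            simpa using hInt f 1
          have hIg : Integrable (fun s : S => g ((s : Fin d → Circle))) μ := by
            simpa using hInt g 1
          rw [integral_add (hInt f z) (hInt g z), integral_add hIf hIg, ihf, ihg]
      | smul c f hf ihf =>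
          have h1 : ∀ v : Fin d → Circle, (c • f) v = c * f v := fun v => rfl
          simp only [h1]
          rw [integral_const_mul, integral_const_mul, ihf]
    -- Urysohn function separating S from z • S
    have hK2c : IsClosed ((fun t => z * t) '' (S : Set (Fin d → Circle))) :=
      (hSc.isCompact.image (continuous_const.mul continuous_id)).isClosed
    have hdisj : Disjoint (S : Set (Fin d → Circle))
        ((fun t => z * t) '' (S : Set (Fin d → Circle))) := by
      rw [Set.disjoint_left]
      rintro x hxS ⟨s, hsS, rfl⟩
      exact hzS (by simpa using mul_mem hxS (inv_mem hsS) : z ∈ S)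
    obtain ⟨f, hf0, hf1, hf01⟩ := exists_continuous_zero_one_of_isClosed hSc hK2c hdisj
    set g : C(Fin d → Circle, ℂ) :=
      (⟨Complex.ofReal, Complex.continuous_ofReal⟩ : C(ℝ, ℂ)).comp f with hg
    -- Stone-Weierstrass
    have hdense : (charAlg d).topologicalClosure = ⊤ :=
      ContinuousMap.starSubalgebra_topologicalClosure_eq_top_of_separatesPoints _
        (charAlg_separates d)
    have hgcl : g ∈ closure ((charAlg d) : Set C(Fin d → Circle, ℂ)) := by
      have : g ∈ (charAlg d).topologicalClosure := by rw [hdense]; trivial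
      exact this
    obtain ⟨P, hPA, hPdist⟩ := Metric.mem_closure_iff.mp hgcl (1 / 3) (by norm_num)
    have hPspan : P ∈ Submodule.span ℂ (Set.range (chi (d := d))) :=
      adjoin_le_span P hPA
    -- numerical contradiction
    set c : ℝ := (μ Set.univ).toReal with hc
    have hcpos : 0 < c := by
      refine ENNReal.toReal_pos ?_ (measure_ne_top μ _)
      exact (isOpen_univ.measure_ne_zero μ Set.univ_nonempty)
    have hI1g : (∫ s : S, g (z * (s : Fin d → Circle)) ∂μ) = (c : ℂ) := by
      have : ∀ s : S, g (z * (s : Fin d → Circle)) = 1 := by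
        intro s
        have : f (z * (s : Fin d → Circle)) = 1 :=
          hf1 ⟨(s : Fin d → Circle), s.2, rfl⟩
        simp [hg, this]
      simp only [this]
      rw [integral_const]
      simp [hc, Complex.real_smul, Measure.real]
    have hI0g : (∫ s : S, g ((s : Fin d → Circle)) ∂μ) = 0 := by
      have : ∀ s : S, g ((s : Fin d → Circle)) = 0 := by
        intro s
        have : f ((s : Fin d → Circle)) = 0 := hf0 s.2
        simp [hg, this]
      simp only [this]
      simp
    have hbound : ∀ v : Fin d → Circle,
        ‖(∫ s : S, g (v * (s : Fin d → Circle)) ∂μ) -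
          ∫ s : S, P (v * (s : Fin d → Circle)) ∂μ‖ ≤ (1 / 3) * c := by
      intro v
      rw [← integral_sub (hInt g v) (hInt P v)]
      have hptw : ∀ s : S, ‖g (v * (s : Fin d → Circle)) - P (v * (s : Fin d → Circle))‖
          ≤ dist g P := by
        intro s
        rw [← dist_eq_norm]
        exact ContinuousMap.dist_apply_le_dist _
      calc ‖∫ s : S, (g (v * (s : Fin d → Circle)) - P (v * (s : Fin d → Circle))) ∂μ‖
          ≤ dist g P * c :=
            norm_integral_le_of_norm_le_const (Eventually.of_forall hptw)
        _ ≤ (1 / 3) * c := mul_le_mul_of_nonneg_right hPdist.le hcpos.le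
    have hb1 := hbound z
    have hb0 := hbound 1
    simp only [one_mul] at hb0
    have hPkey := hkey P hPspan
    have : (c : ℂ) =
        ((∫ s : S, g (z * (s : Fin d → Circle)) ∂μ) -
            ∫ s : S, P (z * (s : Fin d → Circle)) ∂μ) +
          ((∫ s : S, P ((s : Fin d → Circle)) ∂μ) -
            ∫ s : S, g ((s : Fin d → Circle)) ∂μ) := by
      rw [hI1g, hI0g, hPkey]
      ring
    have hnorm : c ≤ (1 / 3) * c + (1 / 3) * c := by
      calc c = ‖(c : ℂ)‖ := by
              rw [Complex.norm_real]; exact (abs_of_pos hcpos).symm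
        _ = ‖_ + _‖ := by rw [this]
        _ ≤ _ + _ := norm_add_le _ _
        _ ≤ (1 / 3) * c + (1 / 3) * c := by
              refine add_le_add hb1 ?_
              rw [norm_sub_rev]
              exact hb0
    linarith
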